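/- Let p be a prime number and let (a_k)_{k∈ℕ} be a sequence in ℤ_p with a_k → 0 p-adically as k → ∞. If some a_k is nonzero, then the set of x ∈ ℤ_p such that Σ_{k=0}^∞ a_k·x^k = 0 is finite. -/

import Mathlib

open Filter Function

namespace StrassmannProof

variable {p : ℕ} [Fact p.Prime]

lemma norm_mul_le_left (u v : ℤ_[p]) : ‖u * v‖ ≤ ‖u‖ :=
  (norm_mul_le u v).trans (mul_le_of_le_one_right (norm_nonneg u) (PadicInt.norm_le_one v))

lemma summable_aux (a : ℕ → ℤ_[p]) (ha : Tendsto a atTop (nhds 0)) (x : ℤ_[p]) :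
    Summable (fun k => a k * x ^ k) := by
  apply NonarchimedeanAddGroup.summable_of_tendsto_cofinite_zero
  rw [Nat.cofinite_eq_atTop]
  exact squeeze_zero_norm (fun n => norm_mul_le_left _ _)
    (tendsto_zero_iff_norm_tendsto_zero.mp ha)

lemma norm_tsum_le (f : ℕ → ℤ_[p]) {C : ℝ} (hC : 0 ≤ C) (h : ∀ k, ‖f k‖ ≤ C) :
    ‖∑' k, f k‖ ≤ C :=
  IsUltrametricDist.norm_tsum_le_of_forall_le_of_nonneg hC h

lemma norm_tsum_lt (f : ℕ → ℤ_[p]) {y : ℤ_[p]} (hy : y ≠ 0) (h : ∀ k, ‖f k‖ < ‖y‖) :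
    ‖∑' k, f k‖ < ‖y‖ := by
  have hv : ‖y‖ = (p : ℝ) ^ (-(y.valuation : ℤ)) := PadicInt.norm_eq_zpow_neg_valuation hy
  have hp1 : (1 : ℝ) < p := by exact_mod_cast (Fact.out : p.Prime).one_lt
  have hle : ‖∑' k, f k‖ ≤ (p : ℝ) ^ (-(y.valuation : ℤ) - 1) := by
    apply norm_tsum_le
    · positivity
    · intro k
      rw [← PadicInt.norm_lt_pow_iff_norm_le_pow_sub_one, ← hv]
      exact h k
  refine lt_of_le_of_lt hle ?_
  rw [hv]
  exact zpow_lt_zpow_right₀ hp1 (by omega)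

lemma norm_add_eq_left (u v : ℤ_[p]) (h : ‖v‖ < ‖u‖) : ‖u + v‖ = ‖u‖ := by
  rw [IsUltrametricDist.norm_add_eq_max_of_norm_ne_norm h.ne', max_eq_left h.le]

set_option maxHeartbeats 1000000 in
lemma key (a : ℕ → ℤ_[p]) (ha : Tendsto a atTop (nhds 0)) (x0 x : ℤ_[p]) :
    ∑' k, a k * x ^ k
      = (∑' k, a k * x0 ^ k)
        + (x - x0) * ∑' (j : ℕ), (∑' (i : ℕ), a (i + (j+1)) * x0 ^ i) * x ^ j := by
  classical
  set F : ℕ × ℕ → ℤ_[p] :=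
    fun q => if q.2 < q.1 then a q.1 * (x ^ q.2 * x0 ^ (q.1 - 1 - q.2)) else 0 with hF
  have hFle : ∀ q, ‖F q‖ ≤ ‖a q.1‖ := by
    intro q
    by_cases h : q.2 < q.1
    · simp only [hF, if_pos h]
      exact norm_mul_le_left _ _
    · simp [hF, if_neg h]
  have hFsum : Summable F := by
    apply NonarchimedeanAddGroup.summable_of_tendsto_cofinite_zero
    rw [Metric.tendsto_nhds]
    intro ε hε
    rw [Filter.eventually_cofinite]
    have h2 : ∀ᶠ k in cofinite, ‖a k‖ < ε := by
      rw [Nat.cofinite_eq_atTop]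
      exact (tendsto_order.mp (tendsto_zero_iff_norm_tendsto_zero.mp ha)).2 ε hε
    have h1 : {k : ℕ | ¬ ‖a k‖ < ε}.Finite := Filter.eventually_cofinite.mp h2
    apply Set.Finite.subset
      (Set.Finite.biUnion h1 (fun k _ => (Set.finite_Iio k).image (fun j => (k, j))))
    intro q hq
    simp only [Set.mem_setOf_eq, dist_zero_right, not_lt] at hq
    have hq1 : q.2 < q.1 := by
      by_contra h
      have : F q = 0 := by simp [hF, h]
      rw [this] at hq
      simp at hq
      linarith
    have hq2 : ¬ ‖a q.1‖ < ε := not_lt.mpr (le_trans hq (hFle q))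
    exact Set.mem_biUnion hq2 ⟨q.2, hq1, rfl⟩
  have hshift : ∀ j : ℕ, Summable (fun i => a (i + (j+1)) * x0 ^ i) := fun j =>
    summable_aux (fun i => a (i + (j+1))) (ha.comp (tendsto_add_atTop_nat (j+1))) x0
  have hs1 := summable_aux a ha x
  have hs0 := summable_aux a ha x0
  have h2 : ∀ k : ℕ, a k * x ^ k - a k * x0 ^ k = (x - x0) * ∑' j, F (k, j) := by
    intro k
    have hts : ∑' j, F (k, j) = ∑ j ∈ Finset.range k, a k * (x ^ j * x0 ^ (k - 1 - j)) := by
      rw [tsum_eq_sum (s := Finset.range k)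
        (by intro j hj; simp only [hF]; rw [if_neg]; simpa using hj)]
      exact Finset.sum_congr rfl (fun j hj => by simp [hF, Finset.mem_range.mp hj])
    rw [hts, ← Finset.mul_sum, ← mul_sub, ← geom_sum₂_mul x x0 k]
    ring
  have h3 : (∑' k, a k * x ^ k) - (∑' k, a k * x0 ^ k)
      = ∑' k, (a k * x ^ k - a k * x0 ^ k) := (hs1.tsum_sub hs0).symm
  have hinner : ∀ j : ℕ, ∑' k, F (k, j) = (∑' (i : ℕ), a (i + (j+1)) * x0 ^ i) * x ^ j := by
    intro j
    have hinj : Function.Injective (fun i : ℕ => i + (j+1)) := fun u v h => Nat.add_right_cancel h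
    have hsupp : Function.support (fun k => F (k, j)) ⊆ Set.range (fun i : ℕ => i + (j+1)) := by
      intro k hk
      have hjk : j < k := by
        by_contra h
        exact hk (by simp [hF, h])
      exact ⟨k - (j+1), show k - (j+1) + (j+1) = k by omega⟩
    rw [← hinj.tsum_eq hsupp]
    have heq : ∀ i : ℕ, F (i + (j+1), j) = (a (i + (j+1)) * x0 ^ i) * x ^ j := by
      intro i
      have h1 : j < i + (j+1) := by omega
      have h2 : i + (j+1) - 1 - j = i := by omega
      simp only [hF, if_pos h1, h2]
      ring
    rw [tsum_congr heq, (hshift j).tsum_mul_right]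
  have hcomm : ∑' (j : ℕ) (k : ℕ), F (k, j) = ∑' (k : ℕ) (j : ℕ), F (k, j) :=
    hFsum.tsum_comm' hFsum.prod_factor hFsum.prod_symm.prod_factor
  have final : (∑' k, a k * x ^ k) - (∑' k, a k * x0 ^ k)
      = (x - x0) * ∑' (j : ℕ), (∑' (i : ℕ), a (i + (j+1)) * x0 ^ i) * x ^ j := by
    have hg : Summable (fun k => ∑' j, F (k, j)) := by
      apply NonarchimedeanAddGroup.summable_of_tendsto_cofinite_zero
      rw [Nat.cofinite_eq_atTop]
      refine squeeze_zero_norm (fun k => ?_) (tendsto_zero_iff_norm_tendsto_zero.mp ha)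
      exact IsUltrametricDist.norm_tsum_le_of_forall_le_of_nonneg (norm_nonneg _)
        (fun j => hFle (k, j))
    rw [h3, tsum_congr h2, hg.tsum_mul_left, ← hcomm, tsum_congr hinner]
  exact sub_eq_iff_eq_add'.mp final

lemma main (N : ℕ) : ∀ a : ℕ → ℤ_[p], Tendsto a atTop (nhds 0) → a N ≠ 0 →
    (∀ k, N < k → ‖a k‖ < ‖a N‖) →
    {x : ℤ_[p] | ∑' k, a k * x ^ k = 0}.Finite := by
  induction N using Nat.strong_induction_on with
  | _ N IH =>
  intro a ha haN hlt
  by_cases hempty : {x : ℤ_[p] | ∑' k, a k * x ^ k = 0} = ∅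
  · rw [hempty]; exact Set.finite_empty
  obtain ⟨x0, hx0⟩ := Set.nonempty_iff_ne_empty.mpr hempty
  rw [Set.mem_setOf_eq] at hx0
  set b : ℕ → ℤ_[p] := fun j => ∑' (i : ℕ), a (i + (j+1)) * x0 ^ i with hb
  have hashift : ∀ c : ℕ, Tendsto (fun i => a (i + c)) atTop (nhds 0) :=
    fun c => ha.comp (tendsto_add_atTop_nat c)
  have hbshift : ∀ j : ℕ, Summable (fun i => a (i + (j+1)) * x0 ^ i) :=
    fun j => summable_aux _ (hashift (j+1)) x0
  have hble : ∀ j, N ≤ j → ‖b j‖ < ‖a N‖ := by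
    intro j hj
    refine norm_tsum_lt _ haN (fun i => ?_)
    exact lt_of_le_of_lt (norm_mul_le_left _ _) (hlt _ (by omega))
  have hbtend : Tendsto b atTop (nhds 0) := by
    rw [NormedAddCommGroup.tendsto_nhds_zero]
    intro ε hε
    have h2 : ∀ᶠ k in atTop, ‖a k‖ < ε / 2 :=
      (tendsto_order.mp (tendsto_zero_iff_norm_tendsto_zero.mp ha)).2 _ (by positivity)
    obtain ⟨K, hK⟩ := eventually_atTop.mp h2
    filter_upwards [eventually_ge_atTop K] with j hj
    have : ‖b j‖ ≤ ε / 2 := by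
      refine norm_tsum_le _ (by positivity) (fun i => ?_)
      exact (norm_mul_le_left _ _).trans (hK _ (by omega)).le
    linarith
  cases N with
  | zero =>
    exfalso
    have h0 : ∑' k, a k * x0 ^ k = a 0 * x0 ^ 0 + ∑' (i : ℕ), a (i + 1) * x0 ^ (i + 1) := by
      rw [← (summable_aux a ha x0).tsum_eq_zero_add]
    have htail : (∑' (i : ℕ), a (i + 1) * x0 ^ (i + 1)) = x0 * b 0 := by
      show _ = x0 * ∑' (i : ℕ), a (i + (0 + 1)) * x0 ^ i
      rw [← (hbshift 0).tsum_mul_left]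
      exact tsum_congr (fun i => by rw [zero_add]; ring)
    have hx : a 0 = -(x0 * b 0) := by
      have := h0
      rw [hx0, htail, pow_zero, mul_one] at this
      linear_combination -this
    have : ‖a 0‖ < ‖a 0‖ := by
      calc ‖a 0‖ = ‖x0 * b 0‖ := by rw [hx, norm_neg]
      _ ≤ ‖b 0‖ := by rw [mul_comm]; exact norm_mul_le_left _ _
      _ < ‖a 0‖ := hble 0 (Nat.zero_le _)
    exact absurd this (lt_irrefl _)
  | succ M =>
    have h0 := (hbshift M).tsum_eq_zero_add
    simp only [zero_add, pow_zero, mul_one] at h0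
    have htail : ‖∑' (i : ℕ), a (i + 1 + (M+1)) * x0 ^ (i + 1)‖ < ‖a (M+1)‖ := by
      refine norm_tsum_lt _ haN (fun i => ?_)
      exact lt_of_le_of_lt (norm_mul_le_left _ _) (hlt _ (by omega))
    have hbM : ‖b M‖ = ‖a (M+1)‖ := by
      have hbM' : b M = a (M+1) + ∑' (i : ℕ), a (i + 1 + (M+1)) * x0 ^ (i + 1) := h0
      rw [hbM', norm_add_eq_left _ _ htail]
    have hbM0 : b M ≠ 0 := by
      intro h
      rw [h, norm_zero] at hbM
      exact haN (norm_eq_zero.mp hbM.symm)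
    have hblt : ∀ j, M < j → ‖b j‖ < ‖b M‖ := by
      intro j hj
      rw [hbM]
      exact hble j (by omega)
    have hfin2 := IH M (Nat.lt_succ_self M) b hbtend hbM0 hblt
    refine Set.Finite.subset (hfin2.insert x0) ?_
    intro x hx
    rw [Set.mem_setOf_eq] at hx
    have hk := key a ha x0 x
    rw [hx, hx0, zero_add] at hk
    rcases mul_eq_zero.mp hk.symm with h | h
    · exact Set.mem_insert_iff.mpr (Or.inl (sub_eq_zero.mp h))
    · exact Set.mem_insert_iff.mpr (Or.inr h)

lemma exists_N (a : ℕ → ℤ_[p]) (ha : Tendsto a atTop (nhds 0)) (hne : ∃ k, a k ≠ 0) :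
    ∃ N, a N ≠ 0 ∧ ∀ k, N < k → ‖a k‖ < ‖a N‖ := by
  classical
  obtain ⟨k0, hk0⟩ := hne
  have hpos : 0 < ‖a k0‖ := norm_pos_iff.mpr hk0
  have hfin : {k : ℕ | ‖a k0‖ ≤ ‖a k‖}.Finite := by
    have h2 : ∀ᶠ k in cofinite, ‖a k‖ < ‖a k0‖ := by
      rw [Nat.cofinite_eq_atTop]
      exact (tendsto_order.mp (tendsto_zero_iff_norm_tendsto_zero.mp ha)).2 _ hpos
    have := Filter.eventually_cofinite.mp h2
    simpa [not_lt] using this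
  set T : Finset ℕ := hfin.toFinset with hT
  have hT0 : k0 ∈ T := by simp [hT]
  obtain ⟨N0, hN0T, hN0max⟩ := T.exists_max_image (fun k => ‖a k‖) ⟨k0, hT0⟩
  set T' : Finset ℕ := T.filter (fun k => ‖a N0‖ ≤ ‖a k‖) with hT'
  have hne' : T'.Nonempty := ⟨N0, by simp [hT', hN0T]⟩
  set N := T'.max' hne' with hN
  have hNT' : N ∈ T' := T'.max'_mem hne'
  have hNT : N ∈ T := Finset.mem_filter.mp hNT' |>.1
  have hNge : ‖a N0‖ ≤ ‖a N‖ := (Finset.mem_filter.mp hNT').2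
  have hNval : ‖a N‖ = ‖a N0‖ := le_antisymm (hN0max N hNT) hNge
  have hk0N : ‖a k0‖ ≤ ‖a N‖ := by
    have : ‖a k0‖ ≤ ‖a N0‖ := by
      have : N0 ∈ {k : ℕ | ‖a k0‖ ≤ ‖a k‖} := by
        rw [hT] at hN0T
        exact hfin.mem_toFinset.mp hN0T
      exact this
    linarith [hNge]
  refine ⟨N, ?_, ?_⟩
  · intro h
    rw [h, norm_zero] at hk0N
    linarith
  · intro k hk
    by_contra hcon
    push_neg at hcon
    have hkT : k ∈ T := by
      rw [hT, hfin.mem_toFinset]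
      exact le_trans hk0N hcon
    have hkT' : k ∈ T' := by
      rw [hT', Finset.mem_filter]
      exact ⟨hkT, le_trans (le_of_eq hNval.symm) hcon⟩
    have := Finset.le_max' T' k hkT'
    omega

end StrassmannProof

/-- The one-variable claim of Section 5 of the paper: a nonzero restricted
(i.e. convergent on `ℤ_p`) power series over `ℤ_p` has only finitely many
zeros in `ℤ_p`. -/
theorem padic_power_series_finite_zeros (p : ℕ) [Fact p.Prime] (a : ℕ → ℤ_[p])
    (ha : Filter.Tendsto a Filter.atTop (nhds 0))
    (hne : ∃ k, a k ≠ 0) :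
    {x : ℤ_[p] | ∑' k : ℕ, a k * x ^ k = 0}.Finite := by
  obtain ⟨N, hN1, hN2⟩ := StrassmannProof.exists_N a ha hne
  exact StrassmannProof.main N a ha hN1 hN2
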